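/- Define Centrist : [0,1]^d → {0,1} by Centrist(x) = 1 iff there exists i with x_i ∈ (1 - 2/d, 1 - 1/d]. Let T = T₁ × ⋯ × T_d where each T_i consists of 2 i.i.d. uniform samples from [0,1]. Condition on the event that for every i, at most one of the two points of T_i lies in (1 - 2/d, 1]. Then the restriction of Centrist to T (viewed as a function on {0,1}^d via the order on each T_i) is monotone. -/
import Mathlib


/-- Restriction of the `Centrist` function to a sampled sub-hypercube is
monotone, conditioned on each coordinate having at most one non-skeptic sample.
Here `g i false ≤ g i true` are the two sampled points of `T_i` in `[0,1]`, and
`Centrist(x) = 1` iff some coordinate lies in `(1-2/d, 1-1/d]`. -/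
theorem stmt_9 (d : ℕ) (hd : 0 < d) (g : Fin d → Bool → ℝ)
    (hrange : ∀ i s, g i s ∈ Set.Icc (0:ℝ) 1)
    (horder : ∀ i, g i false ≤ g i true)
    (hcond : ∀ i, ¬ (1 - 2/(d:ℝ) < g i false ∧ 1 - 2/(d:ℝ) < g i true)) :
    ∀ y z : Fin d → Bool, y ≤ z →
      (∃ i, 1 - 2/(d:ℝ) < g i (y i) ∧ g i (y i) ≤ 1 - 1/(d:ℝ)) →
      (∃ i, 1 - 2/(d:ℝ) < g i (z i) ∧ g i (z i) ≤ 1 - 1/(d:ℝ)) := by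
  rintro y z hyz ⟨i, h1, h2⟩
  refine ⟨i, ?_⟩
  have hi := hyz i
  cases hy : y i <;> cases hz : z i <;> rw [hy] at h1 h2 <;> rw [hy, hz] at hi
  · exact ⟨h1, h2⟩
  · exact absurd ⟨h1, lt_of_lt_of_le h1 (horder i)⟩ (hcond i)
  · exact absurd hi (by simp)
  · exact ⟨h1, h2⟩
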